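/- arXiv:2204.12981 — 2 statements merged into one kernel-verified Lean document; each statement's English description precedes it below -/
import Mathlib

section
/- Let φ : [0,∞) → [0,∞) be monotonically non-increasing and suppose there exist constants α > 0, c > 0 and δ > 1 such that φ(h) ≤ c·(h−k)^(−α)·φ(k)^δ for all real numbers 0 ≤ k < h. Then φ(h) = 0 for all h ≥ t₀, where t₀ := c^(1/α) · φ(0)^((δ−1)/α) · 2^(δ/(δ−1)). -/
/-- Stampacchia's stopping lemma: if `φ : [0,∞) → [0,∞)` is monotonically
non-increasing and `φ h ≤ c * (h - k)^(-α) * (φ k)^δ` for all `0 ≤ k < h`,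
then `φ h = 0` for all `h ≥ t₀ := c^(1/α) * (φ 0)^((δ-1)/α) * 2^(δ/(δ-1))`. -/
theorem stampacchia_stopping_lemma
    (φ : ℝ → ℝ) (α c δ : ℝ)
    (hφ_nonneg : ∀ t : ℝ, 0 ≤ t → 0 ≤ φ t)
    (hφ_mono : ∀ k h : ℝ, 0 ≤ k → k ≤ h → φ h ≤ φ k)
    (hα : 0 < α) (hc : 0 < c) (hδ : 1 < δ)
    (hineq : ∀ k h : ℝ, 0 ≤ k → k < h →
      φ h ≤ c * (h - k) ^ (-α) * (φ k) ^ δ) :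
    ∀ h : ℝ, c ^ (1/α) * (φ 0) ^ ((δ - 1)/α) * 2 ^ (δ/(δ - 1)) ≤ h →
      φ h = 0 := by
  intro h hh
  have hδ1 : 0 < δ - 1 := by linarith
  have hδ0 : 0 < δ := by linarith
  by_cases h0 : φ 0 = 0
  · have ht0 : (0:ℝ) ≤ h := by
      have hz : (φ 0) ^ ((δ - 1)/α) = 0 := by
        rw [h0]; exact Real.zero_rpow (by positivity)
      rw [hz] at hh; simpa using hh
    have h1 := hφ_mono 0 h le_rfl ht0
    have h2 := hφ_nonneg h ht0
    rw [h0] at h1; linarith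
  · have hφ0 : 0 < φ 0 := lt_of_le_of_ne (hφ_nonneg 0 le_rfl) (Ne.symm h0)
    set d : ℝ := c ^ (1/α) * (φ 0) ^ ((δ - 1)/α) * 2 ^ (δ/(δ - 1)) with hd_def
    have hd : 0 < d := by positivity
    set μ : ℝ := α / (δ - 1) with hμ_def
    have hμ : 0 < μ := by positivity
    set k : ℕ → ℝ := fun n => d * (1 - 2 ^ (-(n:ℝ))) with hk_def
    have h2pos : ∀ x : ℝ, (0:ℝ) < 2 ^ x := fun x => Real.rpow_pos_of_pos two_pos x
    have h2le : ∀ n : ℕ, (2:ℝ) ^ (-(n:ℝ)) ≤ 1 :=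
      fun n => Real.rpow_le_one_of_one_le_of_nonpos one_le_two
        (neg_nonpos.2 (Nat.cast_nonneg n))
    have hk_nonneg : ∀ n : ℕ, 0 ≤ k n := by
      intro n
      have h1 := h2le n
      have : (0:ℝ) ≤ 1 - 2 ^ (-(n:ℝ)) := by linarith
      exact mul_nonneg hd.le this
    have hk_lt_d : ∀ n : ℕ, k n < d := by
      intro n
      have h1 := mul_pos hd (h2pos (-(n:ℝ)))
      simp only [hk_def]
      nlinarith
    have hk_mono : ∀ n : ℕ, k n < k (n + 1) := by
      intro n
      have hlt : (2:ℝ) ^ (-((n:ℝ) + 1)) < 2 ^ (-(n:ℝ)) := by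
        apply Real.rpow_lt_rpow_left_iff one_lt_two |>.2
        linarith
      simp only [hk_def]
      push_cast
      nlinarith
    have hk_diff : ∀ n : ℕ, k (n + 1) - k n = d * 2 ^ (-((n:ℝ) + 1)) := by
      intro n
      have h2 : (2:ℝ) ^ (-(n:ℝ)) = 2 ^ (-((n:ℝ)+1)) * 2 := by
        rw [show -(n:ℝ) = -((n:ℝ)+1) + 1 by ring, Real.rpow_add two_pos, Real.rpow_one]
      simp only [hk_def]
      push_cast
      nlinarith
    -- key identity
    have key_id : ∀ n : ℕ,
        c * (d * 2 ^ (-((n:ℝ) + 1))) ^ (-α) * (φ 0 * 2 ^ (-(n:ℝ) * μ)) ^ δ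
          = φ 0 * 2 ^ (-((n:ℝ) + 1) * μ) := by
      intro n
      have e1 : (d * 2 ^ (-((n:ℝ)+1))) ^ (-α)
          = d ^ (-α) * 2 ^ (-((n:ℝ)+1) * -α) := by
        rw [Real.mul_rpow hd.le (h2pos _).le, ← Real.rpow_mul (by norm_num : (0:ℝ) ≤ 2)]
      have e2 : d ^ (-α) = c ^ ((1/α) * -α) * (φ 0) ^ (((δ-1)/α) * -α)
          * 2 ^ ((δ/(δ-1)) * -α) := by
        rw [hd_def, Real.mul_rpow (by positivity) (h2pos _).le,
            Real.mul_rpow (by positivity) (by positivity),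
            ← Real.rpow_mul hc.le, ← Real.rpow_mul hφ0.le,
            ← Real.rpow_mul (by norm_num : (0:ℝ) ≤ 2)]
      have e3 : (φ 0 * 2 ^ (-(n:ℝ) * μ)) ^ δ
          = (φ 0) ^ δ * 2 ^ ((-(n:ℝ) * μ) * δ) := by
        rw [Real.mul_rpow hφ0.le (h2pos _).le, ← Real.rpow_mul (by norm_num : (0:ℝ) ≤ 2)]
      rw [e1, e2, e3]
      have hc1 : c = c ^ (1:ℝ) := (Real.rpow_one c).symm
      calc c * (c ^ ((1/α) * -α) * (φ 0) ^ (((δ-1)/α) * -α) * 2 ^ ((δ/(δ-1)) * -α)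
              * 2 ^ (-((n:ℝ)+1) * -α)) * ((φ 0) ^ δ * 2 ^ ((-(n:ℝ) * μ) * δ))
          = (c ^ (1:ℝ) * c ^ ((1/α) * -α)) * ((φ 0) ^ (((δ-1)/α) * -α) * (φ 0) ^ δ)
              * (2 ^ ((δ/(δ-1)) * -α) * 2 ^ (-((n:ℝ)+1) * -α) * 2 ^ ((-(n:ℝ) * μ) * δ)) := by
            rw [← hc1]; ring
        _ = c ^ ((1:ℝ) + (1/α) * -α) * (φ 0) ^ ((((δ-1)/α) * -α) + δ)
              * 2 ^ (((δ/(δ-1)) * -α) + (-((n:ℝ)+1) * -α) + ((-(n:ℝ) * μ) * δ)) := by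
            rw [← Real.rpow_add hc, ← Real.rpow_add hφ0, ← Real.rpow_add two_pos,
                ← Real.rpow_add two_pos]
        _ = φ 0 * 2 ^ (-((n:ℝ) + 1) * μ) := by
            have g1 : (1:ℝ) + (1/α) * -α = 0 := by field_simp; ring
            have g2 : (((δ-1)/α) * -α) + δ = 1 := by field_simp; ring
            have g3 : ((δ/(δ-1)) * -α) + (-((n:ℝ)+1) * -α) + ((-(n:ℝ) * μ) * δ)
                = -((n:ℝ) + 1) * μ := by
              rw [hμ_def]; field_simp; ring
            rw [g1, g2, g3, Real.rpow_zero, Real.rpow_one, one_mul]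
    -- main induction
    have key : ∀ n : ℕ, φ (k n) ≤ φ 0 * 2 ^ (-(n:ℝ) * μ) := by
      intro n
      induction n with
      | zero => simp [hk_def]
      | succ n ih =>
        have hcast : -(((n:ℕ)+1:ℕ):ℝ) * μ = -((n:ℝ)+1) * μ := by push_cast; ring
        rw [hcast]
        have h1 : φ (k (n + 1)) ≤ c * (k (n+1) - k n) ^ (-α) * (φ (k n)) ^ δ :=
          hineq (k n) (k (n+1)) (hk_nonneg n) (hk_mono n)
        rw [hk_diff n] at h1
        have h2 : (φ (k n)) ^ δ ≤ (φ 0 * 2 ^ (-(n:ℝ) * μ)) ^ δ :=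
          Real.rpow_le_rpow (hφ_nonneg _ (hk_nonneg n)) ih hδ0.le
        have h3 : (0:ℝ) < c * (d * 2 ^ (-((n:ℝ) + 1))) ^ (-α) := by
          have := h2pos (-((n:ℝ)+1)); positivity
        calc φ (k (n+1)) ≤ c * (d * 2 ^ (-((n:ℝ) + 1))) ^ (-α) * (φ (k n)) ^ δ := h1
          _ ≤ c * (d * 2 ^ (-((n:ℝ) + 1))) ^ (-α) * (φ 0 * 2 ^ (-(n:ℝ) * μ)) ^ δ :=
              mul_le_mul_of_nonneg_left h2 h3.le
          _ = φ 0 * 2 ^ (-((n:ℝ) + 1) * μ) := key_id n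
    -- conclude
    have hbound : ∀ n : ℕ, φ h ≤ φ 0 * ((2:ℝ) ^ (-μ)) ^ n := by
      intro n
      have h1 : φ h ≤ φ (k n) := hφ_mono (k n) h (hk_nonneg n) ((hk_lt_d n).le.trans hh)
      have h2 : (2:ℝ) ^ (-(n:ℝ) * μ) = ((2:ℝ) ^ (-μ)) ^ n := by
        rw [← Real.rpow_natCast ((2:ℝ) ^ (-μ)) n,
            ← Real.rpow_mul (by norm_num : (0:ℝ) ≤ 2)]
        ring_nf
      calc φ h ≤ φ 0 * 2 ^ (-(n:ℝ) * μ) := h1.trans (key n)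
        _ = φ 0 * ((2:ℝ) ^ (-μ)) ^ n := by rw [h2]
    have hr1 : (2:ℝ) ^ (-μ) < 1 :=
      Real.rpow_lt_one_of_one_lt_of_neg one_lt_two (by linarith)
    have hr0 : (0:ℝ) ≤ (2:ℝ) ^ (-μ) := (h2pos _).le
    have htend : Filter.Tendsto (fun n : ℕ => φ 0 * ((2:ℝ) ^ (-μ)) ^ n)
        Filter.atTop (nhds 0) := by
      have := tendsto_pow_atTop_nhds_zero_of_lt_one hr0 hr1
      simpa using this.const_mul (φ 0)
    have hle0 : φ h ≤ 0 := ge_of_tendsto htend (Filter.Eventually.of_forall hbound)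
    have hh0 : (0:ℝ) ≤ h := le_trans (by positivity) hh
    linarith [hφ_nonneg h hh0]
end

section
/- Let φ : [0,∞) → [0,∞) be monotonically non-increasing, let α > 0 and δ > 1, and suppose φ(h) ≤ (h−k)^(−α)·φ(k)^δ for all real numbers 0 ≤ k < h. Set t₀ := φ(0)^((δ−1)/α) · 2^(δ/(δ−1)) and k_m := (1 − 2^(−m))·t₀ for m ∈ ℕ₀. Then φ(k_m) ≤ 2^(−m·α/(δ−1)) · φ(0) for all m ∈ ℕ₀. -/
lemma stampacchia_key (φ0 α δ n : ℝ) (h0 : 0 < φ0) (hα : 0 < α) (hδ : 1 < δ) :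
    (2 ^ (-(n+1)) * (φ0 ^ ((δ - 1)/α) * 2 ^ (δ/(δ - 1)))) ^ (-α)
      * (2 ^ (-n * α / (δ - 1)) * φ0) ^ δ
    = 2 ^ (-(n+1) * α / (δ - 1)) * φ0 := by
  have h2 : (0:ℝ) < 2 := by norm_num
  have hδ1 : δ - 1 ≠ 0 := by linarith
  have hL : (0:ℝ) < (2 ^ (-(n+1)) * (φ0 ^ ((δ - 1)/α) * 2 ^ (δ/(δ - 1)))) ^ (-α)
      * (2 ^ (-n * α / (δ - 1)) * φ0) ^ δ := by positivity
  have hR : (0:ℝ) < (2:ℝ) ^ (-(n+1) * α / (δ - 1)) * φ0 := by positivity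
  rw [← Real.exp_log hL, ← Real.exp_log hR]
  congr 1
  rw [Real.log_mul (by positivity) (by positivity),
      Real.log_rpow (by positivity), Real.log_rpow (by positivity),
      Real.log_mul (by positivity) (by positivity),
      Real.log_mul (by positivity) (by positivity),
      Real.log_mul (by positivity) (by positivity),
      Real.log_rpow h2, Real.log_rpow h2, Real.log_rpow h0, Real.log_rpow h2]
  rw [Real.log_mul (by positivity) (by positivity), Real.log_rpow h2]
  field_simp
  ring

/-- The induction estimate in the proof of Stampacchia's stopping lemma
(normalized case `c = 1`): with `t₀ := (φ 0)^((δ-1)/α) * 2^(δ/(δ-1))` and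
`k_m := (1 - 2^(-m)) * t₀` one has `φ (k_m) ≤ 2^(-m·α/(δ-1)) * φ 0`. -/
theorem stampacchia_induction_estimate
    (φ : ℝ → ℝ) (α δ : ℝ)
    (hφ_nonneg : ∀ t : ℝ, 0 ≤ t → 0 ≤ φ t)
    (hφ_mono : ∀ k h : ℝ, 0 ≤ k → k ≤ h → φ h ≤ φ k)
    (hα : 0 < α) (hδ : 1 < δ)
    (hineq : ∀ k h : ℝ, 0 ≤ k → k < h →
      φ h ≤ (h - k) ^ (-α) * (φ k) ^ δ)
    (t₀ : ℝ) (ht₀ : t₀ = (φ 0) ^ ((δ - 1)/α) * 2 ^ (δ/(δ - 1))) :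
    ∀ m : ℕ, φ ((1 - 2 ^ (-(m : ℝ))) * t₀) ≤ 2 ^ (-(m : ℝ) * α / (δ - 1)) * φ 0 := by
  have h2 : (0:ℝ) < 2 := by norm_num
  rcases (hφ_nonneg 0 le_rfl).eq_or_lt' with h0 | h0
  · -- φ 0 = 0, so t₀ = 0 and everything trivial
    intro m
    have ht0 : t₀ = 0 := by
      rw [ht₀, ← h0.symm, Real.zero_rpow (div_ne_zero (by linarith) (ne_of_gt hα)), zero_mul]
    simp [ht0, ← h0.symm]
  · intro m
    induction m with
    | zero => simp
    | succ n ih =>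
      have ht0pos : 0 < t₀ := by rw [ht₀]; positivity
      have hkn : (0:ℝ) ≤ (1 - 2 ^ (-(n : ℝ))) * t₀ := by
        have : (2:ℝ) ^ (-(n : ℝ)) ≤ 1 :=
          Real.rpow_le_one_of_one_le_of_nonpos (by norm_num) (neg_nonpos.mpr (Nat.cast_nonneg n))
        nlinarith
      have hlt : (1 - 2 ^ (-(n : ℝ))) * t₀ < (1 - 2 ^ (-((n:ℕ)+1 : ℝ))) * t₀ := by
        have : (2:ℝ) ^ (-((n:ℝ)+1)) < 2 ^ (-(n:ℝ)) :=
          Real.rpow_lt_rpow_of_exponent_lt (by norm_num) (by linarith)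
        nlinarith
      have hcast : ((n + 1 : ℕ) : ℝ) = (n : ℝ) + 1 := by push_cast; ring
      rw [hcast] at *
      have step := hineq _ _ hkn hlt
      have hdiff : (1 - 2 ^ (-((n:ℝ)+1))) * t₀ - (1 - 2 ^ (-(n : ℝ))) * t₀
          = 2 ^ (-((n:ℝ)+1)) * t₀ := by
        have h2n : (2:ℝ) ^ (-(n:ℝ)) = 2 ^ (-((n:ℝ)+1)) * 2 := by
          rw [← Real.rpow_add_one (by norm_num)]; ring_nf
        rw [h2n]; ring
      rw [hdiff] at step
      have hφpow : (φ ((1 - 2 ^ (-(n : ℝ))) * t₀)) ^ δ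
          ≤ (2 ^ (-(n : ℝ) * α / (δ - 1)) * φ 0) ^ δ :=
        Real.rpow_le_rpow (hφ_nonneg _ hkn) ih (by linarith)
      calc φ ((1 - 2 ^ (-((n:ℝ)+1))) * t₀)
          ≤ (2 ^ (-((n:ℝ)+1)) * t₀) ^ (-α) * (φ ((1 - 2 ^ (-(n : ℝ))) * t₀)) ^ δ := step
        _ ≤ (2 ^ (-((n:ℝ)+1)) * t₀) ^ (-α) * (2 ^ (-(n : ℝ) * α / (δ - 1)) * φ 0) ^ δ := by
            apply mul_le_mul_of_nonneg_left hφpow (by positivity)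
        _ = 2 ^ (-((n:ℝ)+1) * α / (δ - 1)) * φ 0 := by
            rw [ht₀]; exact stampacchia_key (φ 0) α δ n h0 hα hδ
end
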